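/- Let $M^n$ be a hypersurface of a Riemannian $(p,q)$-metallic manifold with induced data $P, V, f$, such that $V$ has no zeros and $JV$ is normal (so $PV = 0$, $f = p$, $\|V\|^2 = q$, and $A(X) = -P(\nabla_X V)/q$). Then $M$ is minimal if and only if $\langle \mathrm{div}(P), V\rangle = 0$, where $\mathrm{div}(P) = \sum_i (\nabla_{e_i}P)(e_i)$ in a local orthonormal frame. -/

import Mathlib

open scoped RealInnerProductSpace

/-- trace of an endomorphism via an orthonormal basis. -/
lemma trace_eq_sum_inner' {E : Type*} [NormedAddCommGroup E] [InnerProductSpace ℝ E]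
    [FiniteDimensional ℝ E] {ι : Type*} [Fintype ι] (b : OrthonormalBasis ι ℝ E)
    (f : E →ₗ[ℝ] E) : LinearMap.trace ℝ E f = ∑ i, ⟪b i, f (b i)⟫ := by
  classical
  rw [LinearMap.trace_eq_matrix_trace ℝ b.toBasis, Matrix.trace]
  congr 1
  ext i
  rw [Matrix.diag_apply, LinearMap.toMatrix_apply, b.coe_toBasis, b.coe_toBasis_repr_apply,
    b.repr_apply_apply]

/-- Hypersurface of a Riemannian metallic manifold (trivialized chart model) with
`V` nowhere zero, `JV` normal (`PV = 0`, `‖V‖² = q`) and shape operator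
`A X = -(1/q) P(∇_X V)`.  Then `M` is minimal (`tr A = 0`) if and only if
`⟨div P, V⟩ = 0`, where `div P = Σᵢ (∇_{eᵢ} P)(eᵢ)` in an orthonormal frame. -/
theorem metallic_hypersurface_minimal_iff
    {E : Type*} [NormedAddCommGroup E] [InnerProductSpace ℝ E] [FiniteDimensional ℝ E]
    {ι : Type*} [Fintype ι] (b : OrthonormalBasis ι ℝ E)
    (p q : ℝ) (hp : 0 < p) (hq : 0 < q)
    (P A : E → E →L[ℝ] E) (V : E → E)
    (hPdiff : Differentiable ℝ P) (hVdiff : Differentiable ℝ V)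
    (hPsym : ∀ x X Y, ⟪P x X, Y⟫ = ⟪X, P x Y⟫)
    (hVnorm : ∀ x, ‖V x‖ ^ 2 = q)
    (hPV : ∀ x, P x (V x) = 0)
    (hA : ∀ x X, A x X = -(1 / q) • P x (fderiv ℝ V x X)) :
    ∀ x, (LinearMap.trace ℝ E ((A x : E →ₗ[ℝ] E)) = 0 ↔
      ⟪∑ i, (fderiv ℝ P x (b i)) (b i), V x⟫ = 0) := by
  intro x
  -- Differentiate `P x (V x) = 0`:
  have key : ∀ X : E, P x (fderiv ℝ V x X) = -(fderiv ℝ P x X) (V x) := by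
    intro X
    have h0 : (fun y => P y (V y)) = fun _ => (0 : E) := funext hPV
    have hd : fderiv ℝ (fun y => P y (V y)) x
        = (P x).comp (fderiv ℝ V x) + (fderiv ℝ P x).flip (V x) :=
      fderiv_clm_apply (hPdiff x) (hVdiff x)
    rw [h0, fderiv_fun_const] at hd
    have h2 := congrArg (fun (L : E →L[ℝ] E) => L X) hd.symm
    simp only [ContinuousLinearMap.add_apply, ContinuousLinearMap.comp_apply,
      ContinuousLinearMap.flip_apply, ContinuousLinearMap.coe_zero, Pi.zero_apply] at h2
    exact eq_neg_of_add_eq_zero_left h2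
  -- symmetry of the derivative of `P`
  have sym : ∀ Z X Y : E, ⟪(fderiv ℝ P x Z) X, Y⟫ = ⟪X, (fderiv ℝ P x Z) Y⟫ := by
    intro Z X Y
    set Φ : (E →L[ℝ] E) →L[ℝ] ℝ :=
      (innerSL ℝ Y).comp (ContinuousLinearMap.apply ℝ E X)
        - (innerSL ℝ X).comp (ContinuousLinearMap.apply ℝ E Y) with hΦ
    have hΦ0 : (fun y => Φ (P y)) = fun _ => (0 : ℝ) := by
      funext y
      simp only [hΦ, ContinuousLinearMap.sub_apply, ContinuousLinearMap.comp_apply,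
        ContinuousLinearMap.apply_apply, innerSL_apply_apply]
      linarith [hPsym y X Y, real_inner_comm Y ((P y) X)]
    have hcomp : fderiv ℝ (fun y => Φ (P y)) x = Φ.comp (fderiv ℝ P x) := by
      have := fderiv_comp x (Φ.differentiableAt) (hPdiff x)
      simpa [ContinuousLinearMap.fderiv, Function.comp_def] using this
    rw [hΦ0, fderiv_fun_const] at hcomp
    have h2 := congrArg (fun (L : E →L[ℝ] ℝ) => L Z) hcomp.symm
    simp only [hΦ, ContinuousLinearMap.comp_apply, ContinuousLinearMap.sub_apply,
      ContinuousLinearMap.apply_apply, innerSL_apply_apply, ContinuousLinearMap.zero_apply,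
      ContinuousLinearMap.coe_zero, Pi.zero_apply] at h2
    linarith [h2, real_inner_comm Y ((fderiv ℝ P x Z) X)]
  -- compute the trace
  have htr : LinearMap.trace ℝ E ((A x : E →ₗ[ℝ] E))
      = (1 / q) * ⟪∑ i, (fderiv ℝ P x (b i)) (b i), V x⟫ := by
    rw [trace_eq_sum_inner' b]
    have : ∀ i, ⟪b i, (A x : E →ₗ[ℝ] E) (b i)⟫
        = (1 / q) * ⟪(fderiv ℝ P x (b i)) (b i), V x⟫ := by
      intro i
      have : (A x : E →ₗ[ℝ] E) (b i) = A x (b i) := rfl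
      rw [this, hA x (b i), key (b i)]
      rw [real_inner_smul_right]
      have hs : ⟪b i, (fderiv ℝ P x (b i)) (V x)⟫ = ⟪(fderiv ℝ P x (b i)) (b i), V x⟫ := by
        rw [← sym (b i) (b i) (V x)]
      rw [inner_neg_right, hs]
      ring
    rw [Finset.sum_congr rfl fun i _ => this i, ← Finset.mul_sum, ← sum_inner]
  rw [htr]
  constructor
  · intro h
    have hq' : (1 : ℝ) / q ≠ 0 := by positivity
    exact (mul_eq_zero.mp h).resolve_left hq'
  · intro h; rw [h, mul_zero]
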